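/- There is an absolute constant $C$ such that for all $l \geq 1$ and $x, y \geq 2$, the number of integers $n$ with $x < n \leq x + y$ and $H(n) \geq l$ is at most $C\left( \dfrac{y}{2\uparrow\uparrow l} + 2\uparrow\uparrow(l-1) \dfrac{(x+y)^{1/(2\uparrow\uparrow(l-1))}}{\log(x+y)} \right)$. -/

import Mathlib

private lemma factorization_lt {n p : ℕ} (hp : p ∈ n.primeFactors) :
    n.factorization p < n := by
  obtain ⟨hprime, hdvd, hn⟩ := Nat.mem_primeFactors.mp hp
  calc n.factorization p < 2 ^ n.factorization p := (by first | exact Nat.lt_two_pow_self | exact Nat.lt_two_pow_self _)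
    _ ≤ p ^ n.factorization p := Nat.pow_le_pow_left hprime.two_le _
    _ ≤ n := Nat.le_of_dvd (Nat.pos_of_ne_zero hn) (Nat.ordProj_dvd n p)

/-- `towerH n` is the height of the prime-tower tree of `n`:
`H(1) = 0` and `H(n) = 1 + max_{p ∣ n} H(ν_p(n))` for `n ≥ 2`. -/
def towerH (n : ℕ) : ℕ :=
  n.primeFactors.attach.sup (fun p => towerH (n.factorization p.1) + 1)
decreasing_by
  exact factorization_lt p.2

/-- Tetration base 2: `tet 0 = 1`, `tet (k+1) = 2 ^ tet k`. -/
def tet : ℕ → ℕ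
  | 0 => 1
  | k + 1 => 2 ^ tet k

private lemma towerH_def (n : ℕ) :
    towerH n = n.primeFactors.attach.sup (fun p => towerH (n.factorization p.1) + 1) := by
  rw [towerH]

/-- divisor extraction -/
private lemma exists_primePow {n k : ℕ} (h : k + 1 ≤ towerH n) :
    ∃ p r : ℕ, p.Prime ∧ 1 ≤ r ∧ k ≤ towerH r ∧ p ^ r ∣ n ∧ p ^ r ≤ n ∧ 0 < n := by
  rw [towerH_def] at h
  rw [Finset.le_sup_iff (by exact Nat.succ_pos k)] at h
  obtain ⟨p, hp, hle⟩ := h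
  have hmem := p.2
  obtain ⟨hprime, hdvd, hn0⟩ := Nat.mem_primeFactors.mp hmem
  refine ⟨p.1, n.factorization p.1, hprime, ?_, by omega, Nat.ordProj_dvd n p.1, ?_, Nat.pos_of_ne_zero hn0⟩
  · exact (Nat.Prime.factorization_pos_of_dvd hprime hn0 hdvd)
  · exact Nat.le_of_dvd (Nat.pos_of_ne_zero hn0) (Nat.ordProj_dvd n p.1)

/-- minimal element: H(r) ≥ k+1 implies r ≥ tet (k+1) -/
private lemma tet_le_of_towerH : ∀ k r : ℕ, k + 1 ≤ towerH r → tet (k + 1) ≤ r := by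
  intro k
  induction k with
  | zero =>
    intro r h
    obtain ⟨p, s, hp, hs, _, _, hle, _⟩ := exists_primePow h
    have : 2 ≤ p ^ s := le_trans hp.two_le (Nat.le_self_pow (by omega) p)
    calc tet 1 = 2 := rfl
      _ ≤ p ^ s := this
      _ ≤ r := hle
  | succ k ih =>
    intro r h
    obtain ⟨p, s, hp, hs, hk, _, hle, _⟩ := exists_primePow h
    have h1 : tet (k + 1) ≤ s := ih s hk
    calc tet (k + 2) = 2 ^ tet (k + 1) := rfl
      _ ≤ 2 ^ s := Nat.pow_le_pow_right (by norm_num) h1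
      _ ≤ p ^ s := Nat.pow_le_pow_left hp.two_le s
      _ ≤ r := hle

private lemma tet_pos (k : ℕ) : 0 < tet k := by
  induction k with
  | zero => exact Nat.one_pos
  | succ k ih => exact Nat.pow_pos (by norm_num)
open Finset

private lemma sum_inv_sq (M : ℕ) : (∑ m ∈ Finset.Icc 2 M, ((m:ℝ)^2)⁻¹) ≤ 1 := by
  have h : ∀ M : ℕ, 1 ≤ M → (∑ m ∈ Finset.Icc 2 M, ((m:ℝ)^2)⁻¹) ≤ 1 - (M:ℝ)⁻¹ := by
    intro M hM
    induction M with
    | zero => omega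
    | succ M ih =>
      rcases Nat.lt_or_ge M 1 with h1 | h1
      · interval_cases M
        simp
      · rw [Finset.sum_Icc_succ_top (by omega)]
        have hM0 : (1:ℝ) ≤ (M:ℝ) := by exact_mod_cast h1
        have key : ((((M:ℕ)+1:ℕ):ℝ)^2)⁻¹ ≤ (M:ℝ)⁻¹ - (((M:ℕ)+1:ℕ):ℝ)⁻¹ := by
          push_cast
          rw [inv_eq_one_div, inv_eq_one_div, inv_eq_one_div, div_sub_div _ _ (by positivity) (by positivity),
            div_le_div_iff₀ (by positivity) (by positivity)]
          nlinarith
        have := ih h1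
        push_cast at *
        linarith
  rcases Nat.lt_or_ge M 1 with h1 | h1
  · interval_cases M <;> simp
  · have := h M h1
    have : (0:ℝ) < (M:ℝ)⁻¹ := by positivity
    linarith [h M h1]

private lemma zsum (M s : ℕ) (hs : 2 ≤ s) :
    (∑ m ∈ Finset.Icc 2 M, ((m:ℝ)^s)⁻¹) ≤ 4 * ((2:ℝ)^s)⁻¹ := by
  have step : ∀ m ∈ Finset.Icc 2 M, ((m:ℝ)^s)⁻¹ ≤ ((2:ℝ)^(s-2))⁻¹ * ((m:ℝ)^2)⁻¹ := by
    intro m hm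
    obtain ⟨hm2, _⟩ := Finset.mem_Icc.mp hm
    have hm2' : (2:ℝ) ≤ (m:ℝ) := by exact_mod_cast hm2
    have h1 : (2:ℝ)^(s-2) * (m:ℝ)^2 ≤ (m:ℝ)^s := by
      calc (2:ℝ)^(s-2) * (m:ℝ)^2 ≤ (m:ℝ)^(s-2) * (m:ℝ)^2 :=
            mul_le_mul_of_nonneg_right (pow_le_pow_left₀ (by norm_num) hm2' _) (by positivity)
        _ = (m:ℝ)^s := by rw [← pow_add]; congr 1; omega
    rw [← mul_inv]
    exact inv_anti₀ (by positivity) h1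
  calc (∑ m ∈ Finset.Icc 2 M, ((m:ℝ)^s)⁻¹)
      ≤ ∑ m ∈ Finset.Icc 2 M, ((2:ℝ)^(s-2))⁻¹ * ((m:ℝ)^2)⁻¹ := Finset.sum_le_sum step
    _ = ((2:ℝ)^(s-2))⁻¹ * ∑ m ∈ Finset.Icc 2 M, ((m:ℝ)^2)⁻¹ := by rw [Finset.mul_sum]
    _ ≤ ((2:ℝ)^(s-2))⁻¹ * 1 := by
        have h0 : (0:ℝ) ≤ ((2:ℝ)^(s-2))⁻¹ := by positivity
        exact mul_le_mul_of_nonneg_left (sum_inv_sq M) h0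
    _ = 4 * ((2:ℝ)^s)⁻¹ := by
        rw [mul_one]
        rw [show ((2:ℝ)^s) = (2:ℝ)^(s-2) * 4 by
          rw [show s = (s-2) + 2 by omega, pow_add]; norm_num]
        rw [mul_inv]
        ring

private lemma geosum (a M : ℕ) : (∑ s ∈ Finset.Icc a M, ((2:ℝ)^s)⁻¹) ≤ 2 * ((2:ℝ)^a)⁻¹ := by
  rcases Nat.lt_or_ge M a with h | h
  · rw [Finset.Icc_eq_empty (by omega)]
    simp
  · have : ∀ s, ((2:ℝ)^s)⁻¹ = ((2:ℝ)⁻¹)^s := by intro s; rw [inv_pow]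
    simp_rw [this]
    have := geom_sum_Ico' (x := (2:ℝ)⁻¹) (by norm_num) (Nat.le_succ_of_le h)
    rw [show Finset.Icc a M = Finset.Ico a (M+1) by rw [Finset.Ico_add_one_right_eq_Icc]]
    rw [this]
    rw [show (1 - (2:ℝ)⁻¹) = 2⁻¹ by norm_num, div_eq_mul_inv, inv_inv]
    have : (0:ℝ) < ((2:ℝ)⁻¹)^(M+1) := by positivity
    simp only [Nat.succ_eq_add_one]
    nlinarith [this]

/-- index set of prime powers -/
private def Pset (X k : ℕ) : Finset (ℕ × ℕ) :=
  ((Finset.Icc 2 X) ×ˢ (Finset.Icc 2 X)).filter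
    (fun q => q.1.Prime ∧ k ≤ towerH q.2 ∧ q.1 ^ q.2 ≤ X)

private lemma covering (x y k : ℕ) (hk : 1 ≤ k) :
    (Finset.Ioc x (x+y)).filter (fun n => k + 1 ≤ towerH n) ⊆
      (Pset (x+y) k).biUnion
        (fun q => (Finset.Ioc x (x+y)).filter (fun n => q.1 ^ q.2 ∣ n)) := by
  intro n hn
  rw [Finset.mem_filter, Finset.mem_Ioc] at hn
  obtain ⟨⟨hxn, hnxy⟩, hH⟩ := hn
  obtain ⟨p, r, hp, hr1, hkr, hdvd, hle, hn0⟩ := exists_primePow hH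
  have hr2 : 2 ≤ r := by
    have h1 : 1 ≤ towerH r := le_trans hk hkr
    have := tet_le_of_towerH 0 r h1
    simpa [tet] using this
  have hpX : p ≤ x + y := by
    calc p ≤ p ^ r := Nat.le_self_pow (by omega) p
      _ ≤ n := hle
      _ ≤ x + y := hnxy
  have hrX : r ≤ x + y := by
    have : r < 2 ^ r := Nat.lt_two_pow_self
    have h2 : 2 ^ r ≤ p ^ r := Nat.pow_le_pow_left hp.two_le r
    omega
  rw [Finset.mem_biUnion]
  refine ⟨(p, r), ?_, ?_⟩
  · rw [Pset, Finset.mem_filter, Finset.mem_product, Finset.mem_Icc, Finset.mem_Icc]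
    exact ⟨⟨⟨hp.two_le, hpX⟩, ⟨hr2, hrX⟩⟩, hp, hkr, le_trans hle hnxy⟩
  · rw [Finset.mem_filter, Finset.mem_Ioc]
    exact ⟨⟨hxn, hnxy⟩, hdvd⟩

/-- the zeta-sum over the pair set -/
private lemma psum (X k : ℕ) (hk : 1 ≤ k) :
    (∑ q ∈ Pset X k, (((q.1:ℝ) ^ q.2))⁻¹) ≤ 8 * (((2:ℝ) ^ tet k))⁻¹ := by
  have hsub : Pset X k ⊆
      (Finset.Icc 2 X) ×ˢ ((Finset.Icc 2 X).filter (fun s => k ≤ towerH s)) := by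
    intro q hq
    rw [Pset, Finset.mem_filter, Finset.mem_product] at hq
    rw [Finset.mem_product, Finset.mem_filter]
    exact ⟨hq.1.1, hq.1.2, hq.2.2.1⟩
  have h1 : (∑ q ∈ Pset X k, (((q.1:ℝ) ^ q.2))⁻¹) ≤
      ∑ q ∈ (Finset.Icc 2 X) ×ˢ ((Finset.Icc 2 X).filter (fun s => k ≤ towerH s)),
        (((q.1:ℝ) ^ q.2))⁻¹ := by
    apply Finset.sum_le_sum_of_subset_of_nonneg hsub
    intro q _ _
    positivity
  have h2 : ∑ q ∈ (Finset.Icc 2 X) ×ˢ ((Finset.Icc 2 X).filter (fun s => k ≤ towerH s)),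
        (((q.1:ℝ) ^ q.2))⁻¹
      = ∑ s ∈ (Finset.Icc 2 X).filter (fun s => k ≤ towerH s),
          ∑ m ∈ Finset.Icc 2 X, (((m:ℝ) ^ s))⁻¹ := by
    rw [Finset.sum_product]
    rw [Finset.sum_comm]
  have h3 : ∀ s ∈ (Finset.Icc 2 X).filter (fun s => k ≤ towerH s),
      (∑ m ∈ Finset.Icc 2 X, (((m:ℝ) ^ s))⁻¹) ≤ 4 * ((2:ℝ)^s)⁻¹ := by
    intro s hs
    rw [Finset.mem_filter, Finset.mem_Icc] at hs
    exact zsum X s hs.1.1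
  have h4 : (Finset.Icc 2 X).filter (fun s => k ≤ towerH s) ⊆ Finset.Icc (tet k) X := by
    intro s hs
    rw [Finset.mem_filter, Finset.mem_Icc] at hs
    rw [Finset.mem_Icc]
    refine ⟨?_, hs.1.2⟩
    obtain ⟨k', rfl⟩ : ∃ k', k = k' + 1 := ⟨k - 1, by omega⟩
    exact tet_le_of_towerH k' s hs.2
  calc (∑ q ∈ Pset X k, (((q.1:ℝ) ^ q.2))⁻¹)
      ≤ ∑ s ∈ (Finset.Icc 2 X).filter (fun s => k ≤ towerH s),
          ∑ m ∈ Finset.Icc 2 X, (((m:ℝ) ^ s))⁻¹ := by rw [← h2]; exact h1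
    _ ≤ ∑ s ∈ (Finset.Icc 2 X).filter (fun s => k ≤ towerH s), 4 * ((2:ℝ)^s)⁻¹ :=
        Finset.sum_le_sum h3
    _ ≤ ∑ s ∈ Finset.Icc (tet k) X, 4 * ((2:ℝ)^s)⁻¹ := by
        apply Finset.sum_le_sum_of_subset_of_nonneg h4
        intro s _ _; positivity
    _ = 4 * ∑ s ∈ Finset.Icc (tet k) X, ((2:ℝ)^s)⁻¹ := by rw [← Finset.mul_sum]
    _ ≤ 4 * (2 * ((2:ℝ)^(tet k))⁻¹) := by
        have := geosum (tet k) X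
        nlinarith [this]
    _ = 8 * (((2:ℝ) ^ tet k))⁻¹ := by ring

/-- count of multiples in Ioc x (x+y) -/
private lemma mult_card (x y m : ℕ) (hm : 1 ≤ m) :
    ((((Finset.Ioc x (x+y)).filter (fun n => m ∣ n)).card : ℝ)) ≤ (y:ℝ)/m + 1 := by
  have hsplit : (Finset.Ioc 0 (x+y)).filter (fun n => m ∣ n) =
      ((Finset.Ioc 0 x).filter (fun n => m ∣ n)) ∪
      ((Finset.Ioc x (x+y)).filter (fun n => m ∣ n)) := by
    rw [← Finset.filter_union]
    congr 1
    rw [Finset.Ioc_union_Ioc_eq_Ioc (by omega) (by omega)]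
  have hdisj : Disjoint ((Finset.Ioc 0 x).filter (fun n => m ∣ n))
      ((Finset.Ioc x (x+y)).filter (fun n => m ∣ n)) := by
    rw [Finset.disjoint_left]
    intro n h1 h2
    rw [Finset.mem_filter, Finset.mem_Ioc] at h1 h2
    omega
  have hcard : (x+y)/m = x/m + ((Finset.Ioc x (x+y)).filter (fun n => m ∣ n)).card := by
    rw [← Nat.Ioc_filter_dvd_card_eq_div, ← Nat.Ioc_filter_dvd_card_eq_div, hsplit,
      Finset.card_union_of_disjoint hdisj]
  have hub : ((Finset.Ioc x (x+y)).filter (fun n => m ∣ n)).card ≤ y/m + 1 := by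
    have := Nat.add_div (a := x) (b := y) (c := m) (by omega)
    have h2 : (x+y)/m ≤ x/m + y/m + 1 := by
      rw [this]
      split <;> omega
    omega
  calc ((((Finset.Ioc x (x+y)).filter (fun n => m ∣ n)).card : ℝ)) ≤ ((y/m + 1 : ℕ) : ℝ) := by
        exact_mod_cast hub
    _ ≤ (y:ℝ)/m + 1 := by
        push_cast
        have := Nat.cast_div_le (m := y) (n := m) (α := ℝ)
        linarith

/-- density of high tower-height integers -/
private lemma density (R k : ℕ) (hk : 1 ≤ k) :
    ((((Finset.Icc 1 R).filter (fun n => k ≤ towerH n)).card : ℝ)) ≤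
      8 * R * ((tet k : ℝ))⁻¹ := by
  rcases Nat.lt_or_ge k 2 with h2 | h2
  · -- k = 1
    have hk1 : k = 1 := by omega
    subst hk1
    have h1 : ((Finset.Icc 1 R).filter (fun n => 1 ≤ towerH n)).card ≤ R := by
      calc ((Finset.Icc 1 R).filter (fun n => 1 ≤ towerH n)).card
          ≤ (Finset.Icc 1 R).card := Finset.card_filter_le _ _
        _ = R := by rw [Nat.card_Icc]; omega
    have : ((tet 1 : ℝ)) = 2 := by norm_num [tet]
    rw [this]
    have hcast : ((((Finset.Icc 1 R).filter (fun n => 1 ≤ towerH n)).card : ℝ)) ≤ (R:ℝ) := by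
      exact_mod_cast h1
    linarith
  · -- k ≥ 2
    obtain ⟨k', rfl⟩ : ∃ k', k = k' + 1 := ⟨k - 1, by omega⟩
    have hk' : 1 ≤ k' := by omega
    have hIcc : Finset.Icc 1 R = Finset.Ioc 0 R := by
      ext n; simp [Nat.lt_iff_add_one_le]
    have hcov := covering 0 R k' hk'
    simp only [Nat.zero_add] at hcov
    have hcard : ((Finset.Ioc 0 R).filter (fun n => k' + 1 ≤ towerH n)).card ≤
        ∑ q ∈ Pset R k', ((Finset.Ioc 0 R).filter (fun n => q.1 ^ q.2 ∣ n)).card :=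
      le_trans (Finset.card_le_card hcov) Finset.card_biUnion_le
    -- each term equals R / q.1^q.2
    have hterm : ∀ q ∈ Pset R k',
        (((Finset.Ioc 0 R).filter (fun n => q.1 ^ q.2 ∣ n)).card : ℝ) ≤ (R : ℝ) * ((q.1:ℝ)^q.2)⁻¹ := by
      intro q hq
      rw [Pset, Finset.mem_filter, Finset.mem_product, Finset.mem_Icc] at hq
      have hp2 : 2 ≤ q.1 := hq.1.1.1
      have : ((Finset.Ioc 0 R).filter (fun n => q.1 ^ q.2 ∣ n)).card = R / q.1 ^ q.2 := by
        have := Nat.Ioc_filter_dvd_card_eq_div R (q.1 ^ q.2)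
        convert this using 2
      rw [this]
      have hpow : (0:ℝ) < ((q.1:ℝ))^q.2 := by positivity
      have := Nat.cast_div_le (m := R) (n := q.1 ^ q.2) (α := ℝ)
      push_cast at this
      rw [div_eq_mul_inv] at this
      exact this
    have hmain : ((((Finset.Ioc 0 R).filter (fun n => k' + 1 ≤ towerH n)).card : ℝ)) ≤
        (R:ℝ) * ∑ q ∈ Pset R k', ((q.1:ℝ)^q.2)⁻¹ := by
      calc ((((Finset.Ioc 0 R).filter (fun n => k' + 1 ≤ towerH n)).card : ℝ))
          ≤ ((∑ q ∈ Pset R k', ((Finset.Ioc 0 R).filter (fun n => q.1 ^ q.2 ∣ n)).card : ℕ) : ℝ) := by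
            exact_mod_cast hcard
        _ = ∑ q ∈ Pset R k', (((Finset.Ioc 0 R).filter (fun n => q.1 ^ q.2 ∣ n)).card : ℝ) := by
            push_cast; rfl
        _ ≤ ∑ q ∈ Pset R k', (R : ℝ) * ((q.1:ℝ)^q.2)⁻¹ := Finset.sum_le_sum hterm
        _ = (R:ℝ) * ∑ q ∈ Pset R k', ((q.1:ℝ)^q.2)⁻¹ := by rw [← Finset.mul_sum]
    have hps := psum R k' hk'
    have htet : ((tet (k'+1) : ℕ) : ℝ) = (2:ℝ) ^ tet k' := by
      show ((2 ^ tet k' : ℕ) : ℝ) = _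
      push_cast
      ring
    rw [hIcc]
    rw [htet]
    have hR0 : (0:ℝ) ≤ (R:ℝ) := by positivity
    calc ((((Finset.Ioc 0 R).filter (fun n => k' + 1 ≤ towerH n)).card : ℝ))
        ≤ (R:ℝ) * ∑ q ∈ Pset R k', ((q.1:ℝ)^q.2)⁻¹ := hmain
      _ ≤ (R:ℝ) * (8 * ((2:ℝ) ^ tet k')⁻¹) := mul_le_mul_of_nonneg_left hps hR0
      _ = 8 * (R:ℝ) * ((2:ℝ) ^ tet k')⁻¹ := by ring

/-- √z * log z ≤ 2 z for z ≥ 1 -/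
private lemma sqrt_log_le (z : ℝ) (hz : 1 ≤ z) : Real.sqrt z * Real.log z ≤ 2 * z := by
  have h1 : (1:ℝ) ≤ Real.sqrt z := Real.one_le_sqrt.mpr hz
  have h2 : Real.log z ≤ 2 * Real.sqrt z := by
    rw [show Real.log z = 2 * Real.log (Real.sqrt z) by
      rw [Real.log_sqrt (by linarith)]; ring]
    have := Real.log_le_sub_one_of_pos (x := Real.sqrt z) (by linarith)
    linarith
  calc Real.sqrt z * Real.log z ≤ Real.sqrt z * (2 * Real.sqrt z) := by
        apply mul_le_mul_of_nonneg_left h2 (by linarith)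
    _ = 2 * (Real.sqrt z * Real.sqrt z) := by ring
    _ = 2 * z := by rw [Real.mul_self_sqrt (by linarith)]

private lemma log_sq_le (A : ℝ) (hA : 1 ≤ A) : (Real.log A)^2 ≤ 16 * Real.sqrt A := by
  have h1 : (1:ℝ) ≤ Real.sqrt A := Real.one_le_sqrt.mpr hA
  have h2 : (1:ℝ) ≤ Real.sqrt (Real.sqrt A) := Real.one_le_sqrt.mpr h1
  have h3 : Real.log A = 4 * Real.log (Real.sqrt (Real.sqrt A)) := by
    rw [Real.log_sqrt (by linarith), Real.log_sqrt (by linarith)]; ring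
  have h4 : Real.log (Real.sqrt (Real.sqrt A)) ≤ Real.sqrt (Real.sqrt A) := by
    have := Real.log_le_sub_one_of_pos (x := Real.sqrt (Real.sqrt A)) (by linarith)
    linarith
  have h5 : 0 ≤ Real.log A := Real.log_nonneg hA
  have h6 : Real.log A ≤ 4 * Real.sqrt (Real.sqrt A) := by rw [h3]; linarith
  calc (Real.log A)^2 ≤ (4 * Real.sqrt (Real.sqrt A))^2 := by
        apply pow_le_pow_left₀ h5 h6
    _ = 16 * (Real.sqrt (Real.sqrt A) * Real.sqrt (Real.sqrt A)) := by ring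
    _ = 16 * Real.sqrt A := by rw [Real.mul_self_sqrt (by linarith)]

/-- Chebyshev-type bound -/
private lemma cheb (N : ℕ) (hN : 2 ≤ N) :
    ((((Finset.range (N+1)).filter Nat.Prime).card : ℝ)) ≤ 6 * N / Real.log N := by
  set Q := (Finset.range (N+1)).filter Nat.Prime with hQ
  set m := N.sqrt with hm
  have hm1 : 1 ≤ m := by
    rw [hm]; exact Nat.sqrt_pos.mpr (by omega)
  set Qb := Q.filter (fun p => m < p) with hQb
  have hNpos : (0:ℝ) < (N:ℝ) := by positivity
  have hlogN : 0 < Real.log N := Real.log_pos (by exact_mod_cast hN)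
  -- product bound
  have hprod : (m+1) ^ Qb.card ≤ 4 ^ N := by
    calc (m+1) ^ Qb.card ≤ ∏ p ∈ Qb, p := by
          apply Finset.pow_card_le_prod
          intro p hp
          rw [hQb, Finset.mem_filter] at hp
          omega
      _ ≤ ∏ p ∈ Q, p := by
          apply Finset.prod_le_prod_of_subset_of_one_le' (Finset.filter_subset _ _)
          intro i hi _
          rw [hQ, Finset.mem_filter] at hi
          exact hi.2.one_lt.le
      _ = primorial N := rfl
      _ ≤ 4 ^ N := primorial_le_4_pow N
  -- log of product bound
  have hlog1 : (Qb.card : ℝ) * Real.log (m+1) ≤ (N:ℝ) * Real.log 4 := by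
    have h1 : ((((m:ℕ)+1) ^ Qb.card : ℕ) : ℝ) ≤ ((4 ^ N : ℕ) : ℝ) := by exact_mod_cast hprod
    push_cast at h1
    have h2 := Real.log_le_log (by positivity) h1
    rw [Real.log_pow, Real.log_pow] at h2
    exact_mod_cast h2
  -- log(m+1) ≥ log N / 2
  have hmN : (N:ℝ) ≤ ((m:ℝ)+1)^2 := by
    have := Nat.lt_succ_sqrt N
    have : N < (m+1)*(m+1) := by rw [hm]; exact Nat.lt_succ_sqrt N
    have h := this
    have : ((N:ℝ)) < ((m:ℝ)+1)*((m:ℝ)+1) := by exact_mod_cast h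
    nlinarith
  have hlogm : Real.log N / 2 ≤ Real.log ((m:ℝ)+1) := by
    have h1 : Real.log N ≤ Real.log (((m:ℝ)+1)^2) := Real.log_le_log hNpos hmN
    rw [Real.log_pow] at h1
    push_cast at h1
    linarith
  have hlogm_pos : 0 < Real.log ((m:ℝ)+1) := lt_of_lt_of_le (by linarith) hlogm
  -- card Qb bound
  have hQbcard : (Qb.card : ℝ) ≤ 4 * (N:ℝ) / Real.log N := by
    have hlog4 : Real.log 4 = 2 * Real.log 2 := by
      rw [show (4:ℝ) = 2^2 by norm_num, Real.log_pow]; push_cast; ring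
    have hlog2 : Real.log 2 < 0.6931471808 := Real.log_two_lt_d9
    have h1 : (Qb.card : ℝ) * (Real.log N / 2) ≤ (N:ℝ) * Real.log 4 := by
      calc (Qb.card : ℝ) * (Real.log N / 2) ≤ (Qb.card : ℝ) * Real.log ((m:ℝ)+1) := by
            apply mul_le_mul_of_nonneg_left hlogm (by positivity)
        _ ≤ (N:ℝ) * Real.log 4 := hlog1
    rw [le_div_iff₀ hlogN]
    nlinarith [hlogN, hNpos]
  -- small primes
  have hsmall : (Q.filter (fun p => ¬ m < p)).card ≤ m := by
    calc (Q.filter (fun p => ¬ m < p)).card ≤ (Finset.Icc 1 m).card := by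
          apply Finset.card_le_card
          intro p hp
          rw [Finset.mem_filter, hQ, Finset.mem_filter] at hp
          rw [Finset.mem_Icc]
          have := hp.1.2.one_lt
          omega
      _ = m := by rw [Nat.card_Icc]; omega
  have hmreal : (m:ℝ) ≤ Real.sqrt N := by
    rw [hm]
    have h1 : (N.sqrt : ℝ)^2 ≤ (N:ℝ) := by
      have := Nat.sqrt_le' N
      have h : (N.sqrt * N.sqrt : ℕ) ≤ N := Nat.sqrt_le N
      have : ((N.sqrt * N.sqrt : ℕ) : ℝ) ≤ (N:ℝ) := by exact_mod_cast h
      push_cast at this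
      nlinarith
    exact (Real.le_sqrt (by positivity) (by positivity)).mpr h1
  have hsmall2 : ((Q.filter (fun p => ¬ m < p)).card : ℝ) ≤ 2 * (N:ℝ) / Real.log N := by
    have h1 : ((Q.filter (fun p => ¬ m < p)).card : ℝ) ≤ (m:ℝ) := by exact_mod_cast hsmall
    have h2 : Real.sqrt N * Real.log N ≤ 2 * N := sqrt_log_le N (by exact_mod_cast (by omega : 1 ≤ N))
    rw [le_div_iff₀ hlogN]
    calc ((Q.filter (fun p => ¬ m < p)).card : ℝ) * Real.log N ≤ Real.sqrt N * Real.log N := by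
          apply mul_le_mul_of_nonneg_right (le_trans h1 hmreal) hlogN.le
      _ ≤ 2 * N := h2
  -- combine
  have hsplit : Qb.card + (Q.filter (fun p => ¬ m < p)).card = Q.card := by
    rw [hQb]
    exact Finset.card_filter_add_card_filter_not _
  have : (Q.card : ℝ) ≤ 4 * (N:ℝ)/Real.log N + 2 * (N:ℝ)/Real.log N := by
    rw [← hsplit]
    push_cast
    linarith
  calc (Q.card : ℝ) ≤ 4 * (N:ℝ)/Real.log N + 2 * (N:ℝ)/Real.log N := this
    _ = 6 * N / Real.log N := by ring

private lemma cheb' (N : ℕ) (z : ℝ) (hz : 2 ≤ z) (hNz : (N:ℝ) ≤ z) :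
    ((((Finset.range (N+1)).filter Nat.Prime).card : ℝ)) ≤ 12 * z / Real.log z := by
  have hlogz : 0 < Real.log z := Real.log_pos (by linarith)
  have hz0 : (0:ℝ) < z := by linarith
  rcases Nat.lt_or_ge N 2 with hN | hN
  · -- no primes below 2
    have : ((Finset.range (N+1)).filter Nat.Prime).card = 0 := by
      rw [Finset.card_eq_zero, Finset.filter_eq_empty_iff]
      intro p hp
      rw [Finset.mem_range] at hp
      intro hpp
      have := hpp.two_le
      omega
    rw [this]
    push_cast
    positivity
  · have h6 := cheb N hN
    have hN0 : (0:ℝ) < (N:ℝ) := by positivity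
    have hNR : (2:ℝ) ≤ (N:ℝ) := by exact_mod_cast hN
    rcases le_or_gt z ((N:ℝ)^2) with hcase | hcase
    · -- N ≥ √z : log N ≥ log z / 2
      have h1 : Real.log z ≤ 2 * Real.log N := by
        have := Real.log_le_log hz0 hcase
        rw [Real.log_pow] at this
        push_cast at this
        linarith
      have hlogN : 0 < Real.log N := Real.log_pos (by exact_mod_cast hN)
      calc ((((Finset.range (N+1)).filter Nat.Prime).card : ℝ)) ≤ 6 * N / Real.log N := h6
        _ ≤ 12 * z / Real.log z := by
            rw [div_le_div_iff₀ hlogN hlogz]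
            have hc : (N:ℝ) * Real.log z ≤ z * (2 * Real.log N) := by
              calc (N:ℝ) * Real.log z ≤ (N:ℝ) * (2 * Real.log N) :=
                    mul_le_mul_of_nonneg_left h1 (by positivity)
                _ ≤ z * (2 * Real.log N) := by
                    apply mul_le_mul_of_nonneg_right hNz (by positivity)
            nlinarith
    · -- N < √z : trivial bound card ≤ N ≤ √z
      have hcard : ((Finset.range (N+1)).filter Nat.Prime).card ≤ N := by
        calc ((Finset.range (N+1)).filter Nat.Prime).card ≤ (Finset.Icc 1 N).card := by
              apply Finset.card_le_card
              intro p hp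
              rw [Finset.mem_filter, Finset.mem_range] at hp
              rw [Finset.mem_Icc]
              have := hp.2.one_lt
              omega
          _ = N := by rw [Nat.card_Icc]; omega
      have h1 : (N:ℝ) ≤ Real.sqrt z := by
        apply (Real.le_sqrt (by positivity) (by positivity)).mpr
        linarith
      have h2 : Real.sqrt z * Real.log z ≤ 2 * z := sqrt_log_le z (by linarith)
      rw [le_div_iff₀ hlogz]
      calc ((((Finset.range (N+1)).filter Nat.Prime).card : ℝ)) * Real.log z
          ≤ (N:ℝ) * Real.log z := by
            apply mul_le_mul_of_nonneg_right (by exact_mod_cast hcard) hlogz.le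
        _ ≤ Real.sqrt z * Real.log z := mul_le_mul_of_nonneg_right h1 hlogz.le
        _ ≤ 2 * z := h2
        _ ≤ 12 * z := by linarith

private lemma tet_le' (k r : ℕ) (hk : 1 ≤ k) (h : k ≤ towerH r) : tet k ≤ r := by
  obtain ⟨k', rfl⟩ : ∃ k', k = k' + 1 := ⟨k - 1, by omega⟩
  exact tet_le_of_towerH k' r h

private lemma le_rpow_of_pow_le {p T : ℕ} {Xr : ℝ} (hT : 0 < T) (h : ((p:ℝ))^(T:ℕ) ≤ Xr) :
    (p:ℝ) ≤ Xr ^ ((1:ℝ)/(T:ℝ)) := by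
  have hp0 : (0:ℝ) ≤ (p:ℝ) := by positivity
  have hXr0 : (0:ℝ) ≤ Xr := le_trans (by positivity) h
  have hT0 : (T:ℝ) ≠ 0 := by positivity
  have key : (p:ℝ) = (((p:ℝ))^(T:ℕ)) ^ ((1:ℝ)/(T:ℝ)) := by
    rw [← Real.rpow_natCast (p:ℝ) T, ← Real.rpow_mul hp0, mul_one_div, div_self hT0,
      Real.rpow_one]
  rw [key]
  exact Real.rpow_le_rpow (by positivity) h (by positivity)

private lemma p2_arith (B a t lg2 : ℝ) (hB : 1 ≤ B) (ha : 0 < a) (ht : 1 ≤ t)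
    (hlg2 : (0.6931471803:ℝ) < lg2) (hls : a^2 ≤ 16*B) :
    B * (8 * ((t*a) / lg2) * t⁻¹) ≤ 200 * t * (B^2) / (t*a) := by
  have ht0 : (0:ℝ) < t := by linarith
  have hlg2' : (0:ℝ) < lg2 := by linarith
  have e1 : B * (8 * ((t*a) / lg2) * t⁻¹) = 8*B*a/lg2 := by
    field_simp
  have e2 : 200 * t * (B^2) / (t*a) = 200*(B^2)/a := by
    rw [div_eq_div_iff (by positivity : (0:ℝ) < t*a).ne' ha.ne']
    ring
  rw [e1, e2]
  rw [div_le_div_iff₀ hlg2' ha]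
  have key : 8*B*(a^2) ≤ 8*B*(16*B) := by
    apply mul_le_mul_of_nonneg_left hls (by linarith)
  nlinarith [key, sq_nonneg B, hB, hlg2]


set_option maxHeartbeats 2000000 in
/-- For `l ≥ 1` and `x, y ≥ 2`, the number of `x < n ≤ x + y` with `H(n) ≥ l` is
`O(y / 2↑↑l + 2↑↑(l-1) (x+y)^{1/2↑↑(l-1)} / log (x+y))`. -/
theorem stmt_13 : ∃ C : ℝ, 0 < C ∧ ∀ l x y : ℕ, 1 ≤ l → 2 ≤ x → 2 ≤ y →
    (((Finset.Ioc x (x + y)).filter (fun n => l ≤ towerH n)).card : ℝ) ≤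
      C * ((y : ℝ) / tet l +
        (tet (l - 1) : ℝ) * ((x : ℝ) + y) ^ ((1 : ℝ) / tet (l - 1)) /
          Real.log ((x : ℝ) + y)) := by
  refine ⟨500, by norm_num, ?_⟩
  intro l x y hl hx hy
  have hXr4 : (4:ℝ) ≤ (x:ℝ) + y := by
    have hx' : (2:ℝ) ≤ (x:ℝ) := by exact_mod_cast hx
    have hy' : (2:ℝ) ≤ (y:ℝ) := by exact_mod_cast hy
    linarith
  have hXrpos : (0:ℝ) < (x:ℝ) + y := by linarith
  have hlogX : (0:ℝ) < Real.log ((x:ℝ) + y) := Real.log_pos (by linarith)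
  obtain ⟨k, rfl⟩ : ∃ k, l = k + 1 := ⟨l - 1, by omega⟩
  simp only [Nat.add_sub_cancel]
  rcases Nat.lt_or_ge k 1 with hk0 | hk
  · -- l = 1 case
    have hk0' : k = 0 := by omega
    subst hk0'
    have hterm2 : (0:ℝ) ≤ (tet 0 : ℝ) * ((x:ℝ) + y) ^ ((1:ℝ)/(tet 0 : ℝ)) /
        Real.log ((x:ℝ) + y) := by
      apply div_nonneg _ hlogX.le
      apply mul_nonneg (by positivity)
      exact Real.rpow_nonneg hXrpos.le _
    have hcard : ((Finset.Ioc x (x + y)).filter (fun n => 0 + 1 ≤ towerH n)).card ≤ y := by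
      calc ((Finset.Ioc x (x + y)).filter (fun n => 0 + 1 ≤ towerH n)).card
          ≤ (Finset.Ioc x (x+y)).card := Finset.card_filter_le _ _
        _ = y := by rw [Nat.card_Ioc]; omega
    have hcardR : (((Finset.Ioc x (x + y)).filter (fun n => 0 + 1 ≤ towerH n)).card : ℝ) ≤ (y:ℝ) := by
      exact_mod_cast hcard
    have htet1 : ((tet (0+1) : ℕ) : ℝ) = 2 := by norm_num [tet]
    rw [htet1]
    have hy0 : (0:ℝ) ≤ (y:ℝ) := by positivity
    linarith
  · -- l = k + 1 with k ≥ 1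
    set Xr : ℝ := (x:ℝ) + y with hXrdef
    set T : ℕ := tet k with hTdef
    have hT1 : 1 ≤ T := tet_pos k
    have hTR : (1:ℝ) ≤ (T:ℝ) := by exact_mod_cast hT1
    have hTne : (T:ℝ) ≠ 0 := by positivity
    have htetl : ((tet (k+1) : ℕ) : ℝ) = (2:ℝ) ^ T := by
      show ((2 ^ T : ℕ) : ℝ) = _
      push_cast; ring
    set A : ℝ := Xr ^ ((1:ℝ)/(T:ℝ)) with hAdef
    have hApos : 0 < A := Real.rpow_pos_of_pos hXrpos _
    have hlogA : Real.log A = Real.log Xr / (T:ℝ) := by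
      rw [hAdef, Real.log_rpow hXrpos]; ring
    have hterm2 : (0:ℝ) ≤ (T:ℝ) * A / Real.log Xr := by positivity
    rcases Nat.lt_or_ge (x + y) (2 ^ T) with hXlt | hX
    · -- interval entirely below tet (k+1) : empty
      have hempty : ((Finset.Ioc x (x + y)).filter (fun n => k + 1 ≤ towerH n)).card = 0 := by
        rw [Finset.card_eq_zero, Finset.filter_eq_empty_iff]
        intro n hn hH
        rw [Finset.mem_Ioc] at hn
        have := tet_le_of_towerH k n hH
        have : 2 ^ T ≤ n := this
        omega
      rw [hempty]
      have h0 : (0:ℝ) ≤ (y:ℝ) / (tet (k+1) : ℝ) := by positivity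
      push_cast
      nlinarith [hterm2, h0]
    · -- main case
      have hXcast : ((x + y : ℕ) : ℝ) = Xr := by push_cast; ring
      have h2T : ((2:ℝ))^(T:ℕ) ≤ Xr := by
        have : ((2 ^ T : ℕ) : ℝ) ≤ ((x + y : ℕ) : ℝ) := by exact_mod_cast hX
        rw [hXcast] at this
        push_cast at this
        exact this
      have hA2 : (2:ℝ) ≤ A := by
        have := le_rpow_of_pow_le (p := 2) (T := T) (Xr := Xr) (by omega) (by push_cast; exact h2T)
        push_cast at this
        exact this
      have hA1 : (1:ℝ) ≤ A := by linarith
      have hlogApos : 0 < Real.log A := Real.log_pos (by linarith)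
      -- counting chain
      set S := (Finset.Ioc x (x + y)).filter (fun n => k + 1 ≤ towerH n) with hSdef
      have hcard1 : S.card ≤ ∑ q ∈ Pset (x+y) k,
          ((Finset.Ioc x (x+y)).filter (fun n => q.1 ^ q.2 ∣ n)).card :=
        le_trans (Finset.card_le_card (covering x y k hk)) Finset.card_biUnion_le
      have hterm : ∀ q ∈ Pset (x+y) k,
          ((((Finset.Ioc x (x+y)).filter (fun n => q.1 ^ q.2 ∣ n)).card : ℝ)) ≤
            (y:ℝ) * ((q.1:ℝ) ^ q.2)⁻¹ + 1 := by
        intro q hq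
        rw [Pset, Finset.mem_filter, Finset.mem_product, Finset.mem_Icc] at hq
        have hp2 : 2 ≤ q.1 := hq.1.1.1
        have hm1 : 1 ≤ q.1 ^ q.2 := Nat.one_le_pow _ _ (by omega)
        have := mult_card x y (q.1 ^ q.2) hm1
        push_cast at this
        rw [div_eq_mul_inv] at this
        exact this
      have hsum1 : (S.card : ℝ) ≤
          (y:ℝ) * (∑ q ∈ Pset (x+y) k, ((q.1:ℝ) ^ q.2)⁻¹) + ((Pset (x+y) k).card : ℝ) := by
        calc (S.card : ℝ) ≤ ((∑ q ∈ Pset (x+y) k,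
              ((Finset.Ioc x (x+y)).filter (fun n => q.1 ^ q.2 ∣ n)).card : ℕ) : ℝ) := by
              exact_mod_cast hcard1
          _ = ∑ q ∈ Pset (x+y) k,
              ((((Finset.Ioc x (x+y)).filter (fun n => q.1 ^ q.2 ∣ n)).card : ℝ)) := by
              push_cast; rfl
          _ ≤ ∑ q ∈ Pset (x+y) k, ((y:ℝ) * ((q.1:ℝ) ^ q.2)⁻¹ + 1) := Finset.sum_le_sum hterm
          _ = (y:ℝ) * (∑ q ∈ Pset (x+y) k, ((q.1:ℝ) ^ q.2)⁻¹) + ((Pset (x+y) k).card : ℝ) := by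
              rw [Finset.sum_add_distrib, ← Finset.mul_sum]
              simp
      have hps := psum (x+y) k hk
      -- split Pset
      set P1 := (Pset (x+y) k).filter (fun q => q.2 < 2 * T) with hP1def
      set P2 := (Pset (x+y) k).filter (fun q => ¬ q.2 < 2 * T) with hP2def
      have hsplit : P1.card + P2.card = (Pset (x+y) k).card :=
        Finset.card_filter_add_card_filter_not _
      -- P1 bound
      set Qfin := (Finset.range (⌊A⌋₊ + 1)).filter Nat.Prime with hQfindef
      set Rfin := (Finset.Icc 1 (2 * T - 1)).filter (fun s => k ≤ towerH s) with hRfindef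
      have hP1sub : P1 ⊆ Qfin ×ˢ Rfin := by
        intro q hq
        rw [hP1def, Finset.mem_filter, Pset, Finset.mem_filter, Finset.mem_product,
          Finset.mem_Icc, Finset.mem_Icc] at hq
        obtain ⟨⟨⟨⟨hp2, hpX⟩, ⟨hr2, hrX⟩⟩, hprime, hkH, hpow⟩, hrlt⟩ := hq
        have hTr : T ≤ q.2 := tet_le' k q.2 hk hkH
        have hpT : q.1 ^ T ≤ x + y :=
          le_trans (Nat.pow_le_pow_right (by omega) hTr) hpow
        have hpTR : ((q.1:ℝ))^(T:ℕ) ≤ Xr := by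
          have : ((q.1 ^ T : ℕ) : ℝ) ≤ ((x + y : ℕ) : ℝ) := by exact_mod_cast hpT
          rw [hXcast] at this
          push_cast at this
          exact this
        have hpA : (q.1 : ℝ) ≤ A := le_rpow_of_pow_le (by omega) hpTR
        rw [Finset.mem_product, hQfindef, Finset.mem_filter, Finset.mem_range,
          hRfindef, Finset.mem_filter, Finset.mem_Icc]
        refine ⟨⟨?_, hprime⟩, ⟨by omega, by omega⟩, hkH⟩
        have : q.1 ≤ ⌊A⌋₊ := Nat.le_floor hpA
        omega
      have hP1card : (P1.card : ℝ) ≤ (Qfin.card : ℝ) * (Rfin.card : ℝ) := by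
        have h1 : P1.card ≤ (Qfin ×ˢ Rfin).card := Finset.card_le_card hP1sub
        rw [Finset.card_product] at h1
        exact_mod_cast h1
      have hQfincard : (Qfin.card : ℝ) ≤ 12 * A / Real.log A :=
        cheb' ⌊A⌋₊ A hA2 (Nat.floor_le hApos.le)
      have hRfincard : (Rfin.card : ℝ) ≤ 16 := by
        have h1 := density (2 * T - 1) k hk
        have h2 : ((2 * T - 1 : ℕ) : ℝ) ≤ 2 * (T:ℝ) := by
          have : (2 * T - 1 : ℕ) ≤ 2 * T := by omega
          calc ((2 * T - 1 : ℕ) : ℝ) ≤ ((2 * T : ℕ) : ℝ) := by exact_mod_cast this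
            _ = 2 * (T:ℝ) := by push_cast; ring
        have hTpos : (0:ℝ) < (T:ℝ) := by linarith
        calc (Rfin.card : ℝ) ≤ 8 * ((2 * T - 1 : ℕ) : ℝ) * ((T:ℝ))⁻¹ := h1
          _ ≤ 8 * (2 * (T:ℝ)) * ((T:ℝ))⁻¹ := by
              apply mul_le_mul_of_nonneg_right _ (by positivity)
              linarith
          _ = 16 := by
              field_simp
              ring
      have hP1fin : (P1.card : ℝ) ≤ 192 * (T:ℝ) * A / Real.log Xr := by
        have h1 : 12 * A / Real.log A = 12 * A * (T:ℝ) / Real.log Xr := by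
          rw [hlogA]
          field_simp
        calc (P1.card : ℝ) ≤ (Qfin.card : ℝ) * (Rfin.card : ℝ) := hP1card
          _ ≤ (12 * A / Real.log A) * 16 := by
              apply mul_le_mul hQfincard hRfincard (by positivity) (by positivity)
          _ = (12 * A * (T:ℝ) / Real.log Xr) * 16 := by rw [h1]
          _ = 192 * (T:ℝ) * A / Real.log Xr := by ring
      -- P2 bound
      set B : ℝ := Real.sqrt A with hBdef
      have hB1 : (1:ℝ) ≤ B := Real.one_le_sqrt.mpr hA1
      have hBpos : (0:ℝ) < B := by linarith
      have hBsq : B ^ 2 = A := Real.sq_sqrt hApos.le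
      set Q2 := Finset.Icc 2 ⌊B⌋₊ with hQ2def
      set R2 := (Finset.Icc 1 (Nat.log 2 (x+y))).filter (fun s => k ≤ towerH s) with hR2def
      have hP2sub : P2 ⊆ Q2 ×ˢ R2 := by
        intro q hq
        rw [hP2def, Finset.mem_filter, Pset, Finset.mem_filter, Finset.mem_product,
          Finset.mem_Icc, Finset.mem_Icc] at hq
        obtain ⟨⟨⟨⟨hp2, hpX⟩, ⟨hr2, hrX⟩⟩, hprime, hkH, hpow⟩, hrge⟩ := hq
        have hrge' : 2 * T ≤ q.2 := by omega
        have hpT : q.1 ^ (2 * T) ≤ x + y :=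
          le_trans (Nat.pow_le_pow_right (by omega) hrge') hpow
        have hpTR : ((q.1:ℝ))^((2*T:ℕ)) ≤ Xr := by
          have : ((q.1 ^ (2*T) : ℕ) : ℝ) ≤ ((x + y : ℕ) : ℝ) := by exact_mod_cast hpT
          rw [hXcast] at this
          push_cast at this
          exact this
        have hpB : (q.1 : ℝ) ≤ B := by
          have h1 : (q.1 : ℝ) ≤ Xr ^ ((1:ℝ)/((2*T:ℕ):ℝ)) :=
            le_rpow_of_pow_le (by omega) hpTR
          have h2 : Xr ^ ((1:ℝ)/((2*T:ℕ):ℝ)) = B := by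
            rw [hBdef, hAdef, Real.sqrt_eq_rpow, ← Real.rpow_mul hXrpos.le]
            congr 1
            push_cast
            field_simp
          rw [h2] at h1
          exact h1
        have hrlog : q.2 ≤ Nat.log 2 (x+y) := by
          have h2r : 2 ^ q.2 ≤ x + y :=
            le_trans (Nat.pow_le_pow_left (by omega) q.2) hpow
          exact (Nat.le_log_iff_pow_le (by norm_num) (by omega)).mpr h2r
        rw [Finset.mem_product, hQ2def, Finset.mem_Icc, hR2def, Finset.mem_filter,
          Finset.mem_Icc]
        refine ⟨⟨hp2, Nat.le_floor hpB⟩, ⟨by omega, hrlog⟩, hkH⟩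
      have hP2card : (P2.card : ℝ) ≤ (Q2.card : ℝ) * (R2.card : ℝ) := by
        have h1 : P2.card ≤ (Q2 ×ˢ R2).card := Finset.card_le_card hP2sub
        rw [Finset.card_product] at h1
        exact_mod_cast h1
      have hQ2card : (Q2.card : ℝ) ≤ B := by
        have h1 : Q2.card ≤ ⌊B⌋₊ := by
          rw [hQ2def, Nat.card_Icc]
          omega
        calc (Q2.card : ℝ) ≤ (⌊B⌋₊ : ℝ) := by exact_mod_cast h1
          _ ≤ B := Nat.floor_le hBpos.le
      have hlog2pos : (0:ℝ) < Real.log 2 := Real.log_pos (by norm_num)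
      have hR2card : (R2.card : ℝ) ≤ 8 * (Real.log Xr / Real.log 2) * ((T:ℝ))⁻¹ := by
        have h1 := density (Nat.log 2 (x+y)) k hk
        have h2 : ((Nat.log 2 (x+y) : ℕ) : ℝ) ≤ Real.log Xr / Real.log 2 := by
          have := Real.natLog_le_logb (x+y) 2
          rw [Real.logb] at this
          rw [hXcast] at this
          exact this
        calc (R2.card : ℝ) ≤ 8 * ((Nat.log 2 (x+y) : ℕ) : ℝ) * ((T:ℝ))⁻¹ := h1
          _ ≤ 8 * (Real.log Xr / Real.log 2) * ((T:ℝ))⁻¹ := by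
              apply mul_le_mul_of_nonneg_right _ (by positivity)
              linarith
      have hP2fin : (P2.card : ℝ) ≤ 200 * (T:ℝ) * A / Real.log Xr := by
        have hlog2lb : (0.6931471803:ℝ) < Real.log 2 := Real.log_two_gt_d9
        have hXlog : Real.log Xr = (T:ℝ) * Real.log A := by
          rw [hlogA]; field_simp
        have hls : (Real.log A)^2 ≤ 16 * B := by
          have := log_sq_le A hA1
          rw [← hBdef] at this
          exact this
        have harith := p2_arith B (Real.log A) (T:ℝ) (Real.log 2) hB1 hlogApos hTR hlog2lb hls
        calc (P2.card : ℝ) ≤ (Q2.card : ℝ) * (R2.card : ℝ) := hP2card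
          _ ≤ B * (8 * (Real.log Xr / Real.log 2) * ((T:ℝ))⁻¹) := by
              apply mul_le_mul hQ2card hR2card (Nat.cast_nonneg _) (by positivity)
          _ = B * (8 * (((T:ℝ) * Real.log A) / Real.log 2) * ((T:ℝ))⁻¹) := by rw [← hXlog]
          _ ≤ 200 * (T:ℝ) * (B^2) / ((T:ℝ) * Real.log A) := harith
          _ = 200 * (T:ℝ) * A / Real.log Xr := by rw [hBsq, ← hXlog]
      -- combine everything
      have hsum2 : (S.card : ℝ) ≤ 8 * (y:ℝ) * ((2:ℝ)^T)⁻¹ +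
          392 * (T:ℝ) * A / Real.log Xr := by
        have hPcast : ((Pset (x+y) k).card : ℝ) = (P1.card : ℝ) + (P2.card : ℝ) := by
          rw [← hsplit]; push_cast; ring
        have hy0 : (0:ℝ) ≤ (y:ℝ) := by positivity
        have h1 : (y:ℝ) * (∑ q ∈ Pset (x+y) k, ((q.1:ℝ) ^ q.2)⁻¹) ≤
            (y:ℝ) * (8 * ((2:ℝ)^T)⁻¹) := mul_le_mul_of_nonneg_left hps hy0
        rw [hPcast] at hsum1
        calc (S.card : ℝ) ≤ (y:ℝ) * (∑ q ∈ Pset (x+y) k, ((q.1:ℝ) ^ q.2)⁻¹) +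
              ((P1.card : ℝ) + (P2.card : ℝ)) := hsum1
          _ ≤ (y:ℝ) * (8 * ((2:ℝ)^T)⁻¹) + (192 * (T:ℝ) * A / Real.log Xr +
              200 * (T:ℝ) * A / Real.log Xr) := by
              apply add_le_add h1
              exact add_le_add hP1fin hP2fin
          _ = 8 * (y:ℝ) * ((2:ℝ)^T)⁻¹ + 392 * (T:ℝ) * A / Real.log Xr := by ring
      rw [htetl]
      have h2Tpos : (0:ℝ) < (2:ℝ)^T := by positivity
      have hgoal1 : 8 * (y:ℝ) * ((2:ℝ)^T)⁻¹ ≤ 500 * ((y:ℝ) / ((2:ℝ)^T)) := by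
        rw [div_eq_mul_inv]
        have : (0:ℝ) ≤ (y:ℝ) * ((2:ℝ)^T)⁻¹ := by positivity
        nlinarith
      have hgoal2 : 392 * (T:ℝ) * A / Real.log Xr ≤ 500 * ((T:ℝ) * A / Real.log Xr) := by
        have e : 392 * (T:ℝ) * A / Real.log Xr = 392 * ((T:ℝ) * A / Real.log Xr) := by ring
        rw [e]
        linarith [hterm2]
      calc (S.card : ℝ) ≤ 8 * (y:ℝ) * ((2:ℝ)^T)⁻¹ + 392 * (T:ℝ) * A / Real.log Xr := hsum2
        _ ≤ 500 * ((y:ℝ) / ((2:ℝ)^T)) + 500 * ((T:ℝ) * A / Real.log Xr) := add_le_add hgoal1 hgoal2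
        _ = 500 * ((y:ℝ) / ((2:ℝ)^T) + (T:ℝ) * A / Real.log Xr) := by ring
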